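/- For an algorithmic stablecoin with trivial incentives, if θ < θ_ where r^c(0, θ_) = 1, then v = r^c(Q, θ) < 1 for every Q ≥ 0; consequently the pegging state p(M) = 1 is not an equilibrium: at p(M) = 1 every user strictly prefers selling in the market over redeeming, so the price must fall below 1. -/

import Mathlib

/-- **algorithmic stablecoin, poor fundamentals.** With trivial
incentives, if `θ < θlow` where `rc 0 θlow = 1`, then the redemption value
`v = rc Q θ` is below `1` for every `Q ≥ 0`; consequently the pegging state is
not an equilibrium: at `p M = 1` every user strictly prefers selling in the
market over redeeming (now, with payoff `rc Q θ`, or in the future, with payoff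
`v' = rc Q' θ`), so the price must fall below `1`. -/
theorem stmt6
    (p : ℝ → ℝ) (rc : ℝ → ℝ → ℝ) (θ θlow : ℝ)
    (hp : StrictAnti p) (hple : ∀ M, p M ≤ 1)
    (hdec : ∀ t : ℝ, StrictAntiOn (fun Q => rc Q t) (Set.Ici 0))
    (hinc : ∀ Q : ℝ, 0 ≤ Q → StrictMono (fun t => rc Q t))
    (hlow : rc 0 θlow = 1) (hθ : θ < θlow) :
    (∀ Q : ℝ, 0 ≤ Q → rc Q θ < 1) ∧
    (∀ M, p M = 1 → ∀ Q Q' : ℝ, 0 ≤ Q → 0 ≤ Q' →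
      max (rc Q θ) (rc Q' θ) < p M) := by
  have key : ∀ Q : ℝ, 0 ≤ Q → rc Q θ < 1 := by
    intro Q hQ
    have h1 : rc Q θ < rc Q θlow := hinc Q hQ hθ
    have h2 : rc Q θlow ≤ rc 0 θlow := by
      rcases eq_or_lt_of_le hQ with h | h
      · rw [← h]
      · exact le_of_lt (hdec θlow (Set.mem_Ici.mpr (le_refl 0)) (Set.mem_Ici.mpr hQ) h)
    calc rc Q θ < rc Q θlow := h1
      _ ≤ 1 := hlow ▸ h2
  refine ⟨key, fun M hM Q Q' hQ hQ' => ?_⟩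
  rw [hM]
  exact max_lt (key Q hQ) (key Q' hQ')
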